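/- (Okunev) Let κ be an infinite cardinal, n ∈ ℕ, and X_0, …, X_n compact Hausdorff spaces with t₀(X_k) ≤ κ for each k ≤ n. Then t₀(∏_{k≤n} X_k) ≤ κ: every κ-continuous real-valued function on the finite product is continuous. -/

import Mathlib

open Cardinal Set Filter Topology

universe u

variable {κ : Cardinal.{u}}

/-- κ-continuity -/
def KCont (κ : Cardinal.{u}) {α : Type u} {β : Type*} [TopologicalSpace α] [TopologicalSpace β]
    (f : α → β) : Prop :=
  ∀ A : Set α, #A ≤ κ → Continuous (A.restrict f)

lemma KCont.comp {α γ : Type u} {β : Type*} [TopologicalSpace α] [TopologicalSpace γ]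
    [TopologicalSpace β] {f : γ → β} {g : α → γ} (hf : KCont κ f) (hg : Continuous g) :
    KCont κ (f ∘ g) := by
  intro A hA
  have h1 : Continuous ((g '' A).restrict f) := hf _ ((Cardinal.mk_image_le).trans hA)
  have h2 : Continuous (fun x : A => (⟨g x, mem_image_of_mem g x.2⟩ : g '' A)) :=
    Continuous.subtype_mk (hg.comp continuous_subtype_val) _
  exact h1.comp h2

lemma continuous_of_subsingleton {α β : Type*} [TopologicalSpace α] [TopologicalSpace β]
    [Subsingleton α] (f : α → β) : Continuous f := by
  constructor
  intro s _
  rcases Set.eq_empty_or_nonempty (f ⁻¹' s) with h | h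
  · rw [h]; exact isOpen_empty
  · have : f ⁻¹' s = Set.univ := by
      rcases h with ⟨x, hx⟩
      apply Set.eq_univ_iff_forall.mpr
      intro y
      have hyx : y = x := Subsingleton.elim y x
      rw [hyx]; exact hx
    rw [this]; exact isOpen_univ

/-- transfer of functional tightness along a homeomorphism -/
lemma t0_transfer {α γ : Type u} [TopologicalSpace α] [TopologicalSpace γ] (e : α ≃ₜ γ)
    (h : ∀ g : γ → ℝ, KCont κ g → Continuous g) :
    ∀ g : α → ℝ, KCont κ g → Continuous g := by
  intro g hg
  have : Continuous ((g ∘ e.symm) ∘ e) := (h _ (hg.comp e.symm.continuous)).comp e.continuous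
  simpa [Function.comp_def] using this

section Two

variable {X Y : Type u} [TopologicalSpace X] [TopologicalSpace Y] [CompactSpace Y] [T2Space Y]

/-- Key lemma: the associated map to C(Y) is κ-continuous. -/
lemma phi_kcont (hκ : ℵ₀ ≤ κ) {f : X × Y → ℝ} (hf : KCont κ f)
    (hc : ∀ x, Continuous fun y => f (x, y)) :
    KCont κ (fun x => (⟨fun y => f (x, y), hc x⟩ : C(Y, ℝ))) := by
  set Φ : X → C(Y, ℝ) := fun x => ⟨fun y => f (x, y), hc x⟩ with hΦ
  intro A hA
  refine continuousOn_iff_continuous_restrict.mp ?_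
  intro a ha
  rw [ContinuousWithinAt, Metric.tendsto_nhds]
  intro ε hε
  by_contra hcon
  -- the bad set
  set S : Set X := {x | ¬ dist (Φ x) (Φ a) < ε} with hS
  have hFne : (𝓝[A] a ⊓ 𝓟 S).NeBot := by
    rw [← Filter.frequently_iff_neBot]
    exact Filter.not_eventually.mp hcon
  set F := 𝓝[A] a ⊓ 𝓟 S with hF
  haveI := hFne
  -- a witness function
  have hwit : ∀ x ∈ S, ∃ y, ε / 2 < dist (f (x, y)) (f (a, y)) := by
    intro x hx
    by_contra hcon2
    push_neg at hcon2
    have : dist (Φ x) (Φ a) ≤ ε / 2 :=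
      (ContinuousMap.dist_le (by linarith)).2 (by intro y; exact hcon2 y)
    exact hx (lt_of_le_of_lt this (by linarith))
  have hSne : S.Nonempty := by
    rcases hFne.nonempty_of_mem (inter_mem (mem_inf_of_left self_mem_nhdsWithin)
      (mem_inf_of_right (mem_principal_self S))) with ⟨x, hx⟩
    exact ⟨x, hx.2⟩
  have hYne : Nonempty Y := by
    rcases hSne with ⟨x, hx⟩
    rcases hwit x hx with ⟨y, _⟩
    exact ⟨y⟩
  have hψ : ∃ ψ : X → Y, ∀ x ∈ S, ε / 2 < dist (f (x, ψ x)) (f (a, ψ x)) := by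
    choose ψ hψ using fun x : S => hwit x x.2
    classical
    refine ⟨fun x => if h : x ∈ S then ψ ⟨x, h⟩ else Classical.arbitrary Y, ?_⟩
    intro x hx
    simpa [hx] using hψ ⟨x, hx⟩
  obtain ⟨ψ, hψ⟩ := hψ
  -- cluster point
  obtain ⟨y₀, -, hy₀⟩ := CompactSpace.isCompact_univ.exists_clusterPt
    (le_principal_iff.mpr univ_mem : Filter.map ψ F ≤ 𝓟 univ)
  set L := F ⊓ Filter.comap ψ (𝓝 y₀) with hL
  have hLne : L.NeBot := by
    rw [← Filter.map_neBot_iff ψ, Filter.push_pull]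
    exact (ClusterPt.neBot hy₀).mono (le_of_eq (inf_comm _ _))
  -- the small set
  set E := A ∩ S with hE
  set C : Set (X × Y) := ((fun x => (x, ψ x)) '' E) ∪ {(a, y₀)} with hC
  have hCκ : #C ≤ κ := by
    refine (Cardinal.mk_union_le _ _).trans (Cardinal.add_le_of_le hκ ?_ ?_)
    · exact Cardinal.mk_image_le.trans
        ((Cardinal.mk_le_mk_of_subset inter_subset_left).trans hA)
    · simpa using (Cardinal.one_le_aleph0.trans hκ)
  have hfC : ContinuousOn f C := continuousOn_iff_continuous_restrict.mpr (hf C hCκ)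
  have hmem : (a, y₀) ∈ C := Or.inr rfl
  have hLE : ∀ᶠ x in L, x ∈ E := by
    have h1 : ∀ᶠ x in L, x ∈ A :=
      Filter.Eventually.filter_mono (le_trans inf_le_left (le_trans inf_le_left inf_le_right))
        (Filter.eventually_principal.mpr fun x hx => hx)
    have h2 : ∀ᶠ x in L, x ∈ S :=
      Filter.Eventually.filter_mono (le_trans inf_le_left inf_le_right)
        (Filter.eventually_principal.mpr fun x hx => hx)
    exact h1.and h2
  have hψt : Filter.Tendsto ψ L (𝓝 y₀) := Filter.tendsto_iff_comap.mpr inf_le_right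
  have hidt : Filter.Tendsto (fun x => x) L (𝓝 a) :=
    le_trans inf_le_left (le_trans inf_le_left nhdsWithin_le_nhds)
  have hten : Filter.Tendsto (fun x => (x, ψ x)) L (𝓝[C] (a, y₀)) := by
    rw [nhdsWithin, Filter.tendsto_inf]
    constructor
    · rw [nhds_prod_eq]
      exact Filter.Tendsto.prodMk hidt hψt
    · exact Filter.tendsto_principal.mpr (hLE.mono fun x hx => Or.inl (mem_image_of_mem _ hx))
  have T1 : Filter.Tendsto (fun x => f (x, ψ x)) L (𝓝 (f (a, y₀))) :=
    (hfC.continuousWithinAt hmem).tendsto.comp hten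
  have T2 : Filter.Tendsto (fun x => f (a, ψ x)) L (𝓝 (f (a, y₀))) :=
    ((hc a).tendsto y₀).comp hψt
  have T3 : Filter.Tendsto (fun x => dist (f (x, ψ x)) (f (a, ψ x))) L (𝓝 0) := by
    have := T1.dist T2
    simpa using this
  have hev : ∀ᶠ x in L, dist (f (x, ψ x)) (f (a, ψ x)) < ε / 2 :=
    T3.eventually (eventually_lt_nhds (by linarith : (0:ℝ) < ε / 2))
  rcases (hev.and hLE).exists with ⟨x, h1, h2⟩
  exact absurd h1 (not_lt.mpr (le_of_lt (hψ x h2.2)))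



/-- Okunev's theorem for two factors. -/
lemma two_factor (hκ : ℵ₀ ≤ κ)
    (htX : ∀ g : X → ℝ, KCont κ g → Continuous g)
    (htY : ∀ g : Y → ℝ, KCont κ g → Continuous g)
    (f : X × Y → ℝ) (hf : KCont κ f) : Continuous f := by
  have hc : ∀ x, Continuous fun y => f (x, y) := by
    intro x
    apply htY
    have h : (fun y => f (x, y)) = f ∘ (fun y => (x, y)) := rfl
    rw [h]
    exact hf.comp (Continuous.prodMk_right x)
  set Φ : X → C(Y, ℝ) := fun x => ⟨fun y => f (x, y), hc x⟩ with hΦdef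
  have hΦk : KCont κ Φ := phi_kcont hκ hf hc
  have hΦ : Continuous Φ := by
    rw [continuous_iff_continuousAt]
    intro a
    have hg : Continuous fun x => dist (Φ x) (Φ a) := by
      apply htX
      intro A hA
      have h : A.restrict (fun x => dist (Φ x) (Φ a))
          = (fun p => dist p (Φ a)) ∘ A.restrict Φ := rfl
      rw [h]
      exact (continuous_id.dist continuous_const).comp (hΦk A hA)
    rw [ContinuousAt, tendsto_iff_dist_tendsto_zero]
    have := hg.tendsto a
    simpa using this
  have h : f = fun p : X × Y => (Φ p.1) p.2 := rfl
  rw [h]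
  exact continuous_eval.comp ((hΦ.comp continuous_fst).prodMk continuous_snd)

end Two

lemma main_aux (κ : Cardinal.{u}) (hκ : ℵ₀ ≤ κ) :
    ∀ (n : ℕ) (X : Fin (n + 1) → Type u)
      (instT : ∀ k, TopologicalSpace (X k))
      (instC : ∀ k, CompactSpace (X k)) (instH : ∀ k, T2Space (X k))
      (ht0 : ∀ k, ∀ g : X k → ℝ, KCont κ g → Continuous g)
      (f : (∀ k, X k) → ℝ) (hf : KCont κ f), Continuous f := by
  intro n
  induction n with
  | zero =>
    intro X instT instC instH ht0 f hf
    let e := Homeomorph.piSplitAt (0 : Fin 1) X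
    haveI : IsEmpty {j : Fin 1 // j ≠ 0} := ⟨fun j => j.2 (Subsingleton.elim _ _)⟩
    have hY : ∀ g : (∀ j : {j : Fin 1 // j ≠ 0}, X j) → ℝ, KCont κ g → Continuous g :=
      fun g _ => continuous_of_subsingleton g
    have hc : Continuous ((f ∘ e.symm) ∘ e) :=
      (two_factor hκ (ht0 0) hY (f ∘ e.symm) (hf.comp e.symm.continuous)).comp e.continuous
    simpa [Function.comp_def] using hc
  | succ m ih =>
    intro X instT instC instH ht0 f hf
    let e := Homeomorph.piSplitAt (0 : Fin (m + 2)) X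
    let eq := finSuccAboveEquiv (0 : Fin (m + 2))
    let e2 : (∀ i : Fin (m + 1), X (eq i)) ≃ₜ (∀ j : {j : Fin (m + 2) // j ≠ 0}, X j) :=
      Homeomorph.piCongrLeft (Y := fun j : {j : Fin (m + 2) // j ≠ 0} => X j) eq
    have hTail : ∀ g : (∀ i : Fin (m + 1), X (eq i)) → ℝ, KCont κ g → Continuous g :=
      ih (fun i => X (eq i)) (fun i => instT (eq i)) (fun i => instC (eq i))
        (fun i => instH (eq i)) (fun i => ht0 (eq i))
    have hY : ∀ g : (∀ j : {j : Fin (m + 2) // j ≠ 0}, X j) → ℝ, KCont κ g → Continuous g :=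
      t0_transfer e2.symm hTail
    have hc : Continuous ((f ∘ e.symm) ∘ e) :=
      (two_factor hκ (ht0 0) hY (f ∘ e.symm) (hf.comp e.symm.continuous)).comp e.continuous
    simpa [Function.comp_def] using hc


/-- (Okunev) Finite products of compact Hausdorff spaces of functional tightness ≤ κ
have functional tightness ≤ κ. -/
theorem functionalTightness_finite_product
    (κ : Cardinal) (hκ : Cardinal.aleph0 ≤ κ) (n : ℕ)
    {X : Fin (n + 1) → Type*} [∀ k, TopologicalSpace (X k)]
    [∀ k, CompactSpace (X k)] [∀ k, T2Space (X k)]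
    (ht0 : ∀ k, ∀ g : X k → ℝ,
      (∀ A : Set (X k), #A ≤ κ → Continuous (A.restrict g)) → Continuous g)
    (f : (∀ k, X k) → ℝ)
    (hkappa : ∀ A : Set (∀ k, X k), #A ≤ κ → Continuous (A.restrict f)) :
    Continuous f := by
  exact main_aux κ hκ n X (fun k => inferInstance) (fun k => inferInstance)
    (fun k => inferInstance) ht0 f hkappa
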